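/- Let ζ, ζ₀ be complex numbers and ϑ, ϑ₀ > 0 real numbers. Then ln(1 + |ζ|²/ϑ) ≥ ln(1 + |ζ₀|²/ϑ₀) − |ζ₀|²/ϑ₀ + 2·Re(conj(ζ₀)·ζ)/ϑ₀ − (|ζ₀|²·(|ζ|² + ϑ))/(ϑ₀·(|ζ₀|² + ϑ₀)). Moreover, equality holds when ζ = ζ₀ and ϑ = ϑ₀. -/

import Mathlib

/-- The tight concave surrogate lower bound (up to the factor `1/ln 2`) constructed
in the paper's SCA-based digital beamforming optimization, with equality at the
previous iterate `(ζ₀, ϑ₀)`. -/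
theorem sca_surrogate_lower_bound (ζ ζ0 : ℂ) (ϑ ϑ0 : ℝ) (hϑ : 0 < ϑ) (hϑ0 : 0 < ϑ0) :
    Real.log (1 + ‖ζ‖ ^ 2 / ϑ) ≥
      Real.log (1 + ‖ζ0‖ ^ 2 / ϑ0) - ‖ζ0‖ ^ 2 / ϑ0 +
        2 * (starRingEnd ℂ ζ0 * ζ).re / ϑ0 -
        ‖ζ0‖ ^ 2 * (‖ζ‖ ^ 2 + ϑ) / (ϑ0 * (‖ζ0‖ ^ 2 + ϑ0)) ∧
    (ζ = ζ0 → ϑ = ϑ0 →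
      Real.log (1 + ‖ζ‖ ^ 2 / ϑ) =
        Real.log (1 + ‖ζ0‖ ^ 2 / ϑ0) - ‖ζ0‖ ^ 2 / ϑ0 +
          2 * (starRingEnd ℂ ζ0 * ζ).re / ϑ0 -
          ‖ζ0‖ ^ 2 * (‖ζ‖ ^ 2 + ϑ) / (ϑ0 * (‖ζ0‖ ^ 2 + ϑ0))) := by
  have hS : (0:ℝ) ≤ ‖ζ‖ ^ 2 := by positivity
  have hS0 : (0:ℝ) ≤ ‖ζ0‖ ^ 2 := by positivity
  have hc : (0:ℝ) < ‖ζ0‖ ^ 2 + ϑ0 := by positivity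
  have hSϑ : (0:ℝ) < ‖ζ‖ ^ 2 + ϑ := by positivity
  constructor
  · -- the inequality
    have hR : (starRingEnd ℂ ζ0 * ζ).re ≤ ‖ζ0‖ * ‖ζ‖ := by
      calc (starRingEnd ℂ ζ0 * ζ).re ≤ ‖starRingEnd ℂ ζ0 * ζ‖ := Complex.re_le_norm _
        _ = ‖ζ0‖ * ‖ζ‖ := by rw [norm_mul, RCLike.norm_conj]
    have hu : (0:ℝ) < 1 + ‖ζ‖ ^ 2 / ϑ := by positivity
    have hu0 : (0:ℝ) < 1 + ‖ζ0‖ ^ 2 / ϑ0 := by positivity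
    have hlog : Real.log ((1 + ‖ζ0‖ ^ 2 / ϑ0) / (1 + ‖ζ‖ ^ 2 / ϑ)) ≤
        (1 + ‖ζ0‖ ^ 2 / ϑ0) / (1 + ‖ζ‖ ^ 2 / ϑ) - 1 :=
      Real.log_le_sub_one_of_pos (by positivity)
    rw [Real.log_div (ne_of_gt hu0) (ne_of_gt hu)] at hlog
    have hratio : (1 + ‖ζ0‖ ^ 2 / ϑ0) / (1 + ‖ζ‖ ^ 2 / ϑ)
        = (‖ζ0‖ ^ 2 + ϑ0) * ϑ / (ϑ0 * (‖ζ‖ ^ 2 + ϑ)) := by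
      field_simp
      ring
    rw [hratio] at hlog
    -- key algebraic inequality
    have key : - (‖ζ0‖ ^ 2 / ϑ0) + 2 * (starRingEnd ℂ ζ0 * ζ).re / ϑ0 -
        ‖ζ0‖ ^ 2 * (‖ζ‖ ^ 2 + ϑ) / (ϑ0 * (‖ζ0‖ ^ 2 + ϑ0)) ≤
        1 - (‖ζ0‖ ^ 2 + ϑ0) * ϑ / (ϑ0 * (‖ζ‖ ^ 2 + ϑ)) := by
      rw [← sub_nonneg]
      have h1 : (0:ℝ) ≤ ((‖ζ0‖ ^ 2 + ϑ0) * ‖ζ‖ - ‖ζ0‖ * (‖ζ‖ ^ 2 + ϑ)) ^ 2 := sq_nonneg _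
      have h2 : (0:ℝ) ≤ (‖ζ0‖ * ‖ζ‖ - (starRingEnd ℂ ζ0 * ζ).re) * ((‖ζ0‖ ^ 2 + ϑ0) * (‖ζ‖ ^ 2 + ϑ)) := by
        apply mul_nonneg (by linarith) (by positivity)
      have e : 1 - (‖ζ0‖ ^ 2 + ϑ0) * ϑ / (ϑ0 * (‖ζ‖ ^ 2 + ϑ)) -
          (- (‖ζ0‖ ^ 2 / ϑ0) + 2 * (starRingEnd ℂ ζ0 * ζ).re / ϑ0 -
            ‖ζ0‖ ^ 2 * (‖ζ‖ ^ 2 + ϑ) / (ϑ0 * (‖ζ0‖ ^ 2 + ϑ0)))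
          = (((‖ζ0‖ ^ 2 + ϑ0) * ‖ζ‖ - ‖ζ0‖ * (‖ζ‖ ^ 2 + ϑ)) ^ 2
              + 2 * ((‖ζ0‖ * ‖ζ‖ - (starRingEnd ℂ ζ0 * ζ).re) * ((‖ζ0‖ ^ 2 + ϑ0) * (‖ζ‖ ^ 2 + ϑ))))
            / (ϑ0 * (‖ζ0‖ ^ 2 + ϑ0) * (‖ζ‖ ^ 2 + ϑ)) := by
        field_simp
        ring
      rw [e]
      positivity
    linarith
  · -- equality at the previous iterate
    rintro rfl rfl
    have hre : (starRingEnd ℂ ζ * ζ).re = ‖ζ‖ ^ 2 := by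
      have := Complex.mul_conj ζ
      rw [mul_comm] at this
      rw [this]
      rw [Complex.ofReal_re, Complex.normSq_eq_norm_sq]
    rw [hre]
    field_simp
    ring
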